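/- A function f ∈ V ⊗ ℂ(z_1,…,z_n,h) is skew-invariant with respect to the S_n^+-action (i.e. s_i^+ f = −f for all i = 1,…,n−1) if and only if the function Ď^{−1} f is invariant with respect to the S_n^+-action; similarly, f is skew-invariant with respect to the S_n^−-action if and only if D^{−1} f is invariant with respect to the S_n^−-action, where D = ∏_{1≤i<j≤n}(z_i−z_j+h) and Ď = ∏_{1≤i<j≤n}(z_j−z_i+h). -/

import Mathlib

open scoped BigOperators

set_option synthInstance.maxHeartbeats 1000000
set_option maxHeartbeats 1000000
set_option maxRecDepth 8000

noncomputable section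

namespace GRTV

/-- The field `ℂ(z_1,…,z_n,h)` of rational functions. -/
abbrev K (n : ℕ) : Type := FractionRing (MvPolynomial (Fin n ⊕ Unit) ℂ)

/-- The variable `z_i`. -/
def z {n : ℕ} (i : Fin n) : K n :=
  algebraMap (MvPolynomial (Fin n ⊕ Unit) ℂ) (K n) (MvPolynomial.X (Sum.inl i))

/-- The variable `h`. -/
def hvar {n : ℕ} : K n :=
  algebraMap (MvPolynomial (Fin n ⊕ Unit) ℂ) (K n) (MvPolynomial.X (Sum.inr ()))

/-- The field automorphism of `ℂ(z_1,…,z_n,h)` permuting the variables `z_i` by `σ`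
(and fixing `h`); `f ↦ f^σ`. -/
def permK {n : ℕ} (σ : Equiv.Perm (Fin n)) : K n ≃+* K n :=
  IsFractionRing.ringEquivOfRingEquiv
    (MvPolynomial.renameEquiv ℂ (Equiv.sumCongr σ (Equiv.refl Unit))).toRingEquiv

/-- `V ⊗ ℂ(z_1,…,z_n,h)` in coordinates: a vector is the family of its coordinates
in the basis `{v_I}`, where a basis index (a decomposition `I`) is recorded as the word
`m : Fin n → Fin N` with `I_j = m⁻¹(j)`. -/
abbrev VV (n N : ℕ) : Type := (Fin n → Fin N) → K n

/-- `h` for the `+` case (`ε = true`) and `-h` for the `−` case (`ε = false`). -/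
def sign' {n : ℕ} (ε : Bool) : K n := if ε then hvar else -hvar

def fin1 {n : ℕ} (i : ℕ) (hi : i + 1 < n) : Fin n := ⟨i, Nat.lt_of_succ_lt hi⟩
def fin2 {n : ℕ} (i : ℕ) (hi : i + 1 < n) : Fin n := ⟨i + 1, hi⟩

/-- The operator `s_i^±` (`ε = true` for `+`, `ε = false` for `−`):
`s_i^± f = ((z_i−z_{i+1})P^{(i,i+1)} ∓ h)/(z_i−z_{i+1}) · f^{s_i} ± h/(z_i−z_{i+1}) · f`.
Here `P^{(i,i+1)}` acts on coordinates by precomposing the word with the transposition,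
and `f^{s_i}` applies `permK` coordinatewise. -/
def sOp {n N : ℕ} (ε : Bool) (i : ℕ) (hi : i + 1 < n) (f : VV n N) : VV n N :=
  fun m =>
    ((z (fin1 i hi) - z (fin2 i hi)) *
          permK (Equiv.swap (fin1 i hi) (fin2 i hi))
            (f (m ∘ ⇑(Equiv.swap (fin1 i hi) (fin2 i hi))))
        - sign' ε * permK (Equiv.swap (fin1 i hi) (fin2 i hi)) (f m))
      / (z (fin1 i hi) - z (fin2 i hi))
    + sign' ε / (z (fin1 i hi) - z (fin2 i hi)) * f m

/-- `D = ∏_{1≤i<j≤n}(z_i−z_j+h)`. -/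
def Dpoly (n : ℕ) : K n :=
  ∏ p ∈ Finset.univ.filter (fun p : Fin n × Fin n => p.1 < p.2), (z p.1 - z p.2 + hvar)

/-- `Ď = ∏_{1≤i<j≤n}(z_j−z_i+h)`. -/
def Dcheck (n : ℕ) : K n :=
  ∏ p ∈ Finset.univ.filter (fun p : Fin n × Fin n => p.1 < p.2), (z p.2 - z p.1 + hvar)

/-! ### Auxiliary lemmas -/

lemma permK_z {n : ℕ} (σ : Equiv.Perm (Fin n)) (i : Fin n) : permK σ (z i) = z (σ i) := by
  simp [permK, z, IsFractionRing.ringEquivOfRingEquiv_algebraMap]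

lemma permK_hvar {n : ℕ} (σ : Equiv.Perm (Fin n)) : permK σ (hvar : K n) = hvar := by
  simp [permK, hvar, IsFractionRing.ringEquivOfRingEquiv_algebraMap]

lemma algebraMap_ne_zero {n : ℕ} {p : MvPolynomial (Fin n ⊕ Unit) ℂ} (hp : p ≠ 0) :
    algebraMap (MvPolynomial (Fin n ⊕ Unit) ℂ) (K n) p ≠ 0 := by
  simpa using (IsFractionRing.to_map_eq_zero_iff (K := K n)).not.mpr hp

lemma zsub_ne {n : ℕ} {i j : Fin n} (hij : i ≠ j) : z i - z j ≠ (0 : K n) := by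
  rw [z, z, ← map_sub]
  apply algebraMap_ne_zero
  intro hc
  have := congrArg (MvPolynomial.eval (fun v => if v = Sum.inl i then (1:ℂ) else 0)) hc
  simp [Sum.inl.injEq, hij.symm] at this

lemma term_ne {n : ℕ} (i j : Fin n) : z i - z j + hvar ≠ (0 : K n) := by
  rw [z, z, hvar, ← map_sub, ← map_add]
  apply algebraMap_ne_zero
  intro hc
  have := congrArg (MvPolynomial.eval (fun v => Sum.elim (fun _ => (0:ℂ)) (fun _ => 1) v)) hc
  simp at this

lemma swap_lt {n : ℕ} (i : ℕ) (hi : i + 1 < n) {p q : Fin n} (hpq : p < q)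
    (hne : ¬(p = fin1 i hi ∧ q = fin2 i hi)) :
    Equiv.swap (fin1 i hi) (fin2 i hi) p < Equiv.swap (fin1 i hi) (fin2 i hi) q := by
  simp only [Equiv.swap_apply_def, fin1, fin2, Fin.ext_iff, Fin.lt_def] at *
  split_ifs <;> simp_all <;> omega

lemma prod_swap {n : ℕ} {M : Type*} [CommMonoid M] (i : ℕ) (hi : i + 1 < n)
    (G : Fin n → Fin n → M) :
    (∏ p ∈ Finset.univ.filter (fun p : Fin n × Fin n => p.1 < p.2),
        G (Equiv.swap (fin1 i hi) (fin2 i hi) p.1) (Equiv.swap (fin1 i hi) (fin2 i hi) p.2))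
        * G (fin1 i hi) (fin2 i hi)
      = (∏ p ∈ Finset.univ.filter (fun p : Fin n × Fin n => p.1 < p.2), G p.1 p.2)
        * G (fin2 i hi) (fin1 i hi) := by
  set a := fin1 i hi with ha
  set b := fin2 i hi with hb
  set σ := Equiv.swap a b with hσ
  have hab : a < b := by simp [ha, hb, fin1, fin2, Fin.lt_def]
  have hmem : (a, b) ∈ Finset.univ.filter (fun p : Fin n × Fin n => p.1 < p.2) := by
    simp [hab]
  have hσa : σ a = b := Equiv.swap_apply_left a b
  have hσb : σ b = a := Equiv.swap_apply_right a b
  have hmemerase : ∀ p ∈ (Finset.univ.filter (fun p : Fin n × Fin n => p.1 < p.2)).erase (a, b),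
      (σ p.1, σ p.2) ∈ (Finset.univ.filter (fun p : Fin n × Fin n => p.1 < p.2)).erase (a, b) := by
    intro p hp
    rw [Finset.mem_erase, Finset.mem_filter] at hp ⊢
    refine ⟨?_, Finset.mem_univ _, swap_lt i hi hp.2.2 (fun hc => hp.1 (Prod.ext hc.1 hc.2))⟩
    intro hc
    have h1 : p.1 = b := by
      have := congrArg Prod.fst hc
      simp only at this
      have := congrArg σ this
      rwa [Equiv.swap_apply_self, hσa] at this
    have h2 : p.2 = a := by
      have := congrArg Prod.snd hc
      simp only at this
      have := congrArg σ this
      rwa [Equiv.swap_apply_self, hσb] at this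
    rw [h1, h2] at hp
    exact absurd (lt_trans hab hp.2.2) (lt_irrefl a)
  have heq : (∏ p ∈ (Finset.univ.filter (fun p : Fin n × Fin n => p.1 < p.2)).erase (a, b),
        G (σ p.1) (σ p.2))
      = ∏ p ∈ (Finset.univ.filter (fun p : Fin n × Fin n => p.1 < p.2)).erase (a, b),
        G p.1 p.2 := by
    apply Finset.prod_nbij' (fun p => (σ p.1, σ p.2)) (fun p => (σ p.1, σ p.2))
      hmemerase hmemerase
    · intro p _; exact Prod.ext (Equiv.swap_apply_self a b p.1) (Equiv.swap_apply_self a b p.2)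
    · intro p _; exact Prod.ext (Equiv.swap_apply_self a b p.1) (Equiv.swap_apply_self a b p.2)
    · intro p _; rfl
  rw [← Finset.prod_erase_mul _ _ hmem, ← Finset.prod_erase_mul _ _ hmem, hσa, hσb, heq]
  simp only [mul_assoc]
  rw [mul_comm (G a b) (G b a)]

lemma key {F : Type*} [Field F] (ab s d cd cu cv v : F)
    (hab : ab ≠ 0) (hd : d ≠ 0) (hcd : cd ≠ 0)
    (hrel : cd * (s - ab) = d * (ab + s)) :
    ((ab * cu - s * cv) / ab + s / ab * v = -v) ↔
    ((ab * (cd⁻¹ * cu) - s * (cd⁻¹ * cv)) / ab + s / ab * (d⁻¹ * v) = d⁻¹ * v) := by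
  have h1 : ((ab * cu - s * cv) / ab + s / ab * v = -v) ↔ ab * cu - s * cv = -(ab + s) * v := by
    rw [div_mul_eq_mul_div, ← add_div, div_eq_iff hab]
    constructor <;> intro h <;> linear_combination h
  have hX : (d * (ab * cu - s * cv) + s * cd * v = ab * cd * v) ↔
      ab * cu - s * cv = -(ab + s) * v := by
    constructor
    · intro h
      apply mul_left_cancel₀ hd
      linear_combination h - v * hrel
    · intro h
      linear_combination d * h + v * hrel
  have h2 : ((ab * (cd⁻¹ * cu) - s * (cd⁻¹ * cv)) / ab + s / ab * (d⁻¹ * v) = d⁻¹ * v) ↔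
      (d * (ab * cu - s * cv) + s * cd * v = ab * cd * v) := by
    constructor
    · intro h
      field_simp at h
      exact mul_left_cancel₀ (mul_ne_zero hab hd)
        (show ab * d * (d * (ab * cu - s * cv) + s * cd * v) = ab * d * (ab * cd * v) by
          linear_combination ab * d * h)
    · intro h
      field_simp
      linear_combination h
  rw [h1, h2, hX]

lemma Dcheck_ne {n : ℕ} : Dcheck n ≠ 0 :=
  Finset.prod_ne_zero_iff.mpr (fun p _ => term_ne _ _)

lemma Dpoly_ne {n : ℕ} : Dpoly n ≠ 0 :=
  Finset.prod_ne_zero_iff.mpr (fun p _ => term_ne _ _)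

lemma permK_ne {n : ℕ} (σ : Equiv.Perm (Fin n)) {x : K n} (hx : x ≠ 0) : permK σ x ≠ 0 := by
  intro hc
  exact hx ((permK σ).injective (by simpa using hc))

lemma fin1_ne_fin2 {n : ℕ} (i : ℕ) (hi : i + 1 < n) : fin1 i hi ≠ fin2 i hi := by
  simp [fin1, fin2, Fin.ext_iff]

lemma perm_Dcheck {n : ℕ} (i : ℕ) (hi : i + 1 < n) :
    permK (Equiv.swap (fin1 i hi) (fin2 i hi)) (Dcheck n) *
        (z (fin2 i hi) - z (fin1 i hi) + hvar)
      = Dcheck n * (z (fin1 i hi) - z (fin2 i hi) + hvar) := by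
  have hmap : permK (Equiv.swap (fin1 i hi) (fin2 i hi)) (Dcheck n)
      = ∏ p ∈ Finset.univ.filter (fun p : Fin n × Fin n => p.1 < p.2),
          (z (Equiv.swap (fin1 i hi) (fin2 i hi) p.2)
            - z (Equiv.swap (fin1 i hi) (fin2 i hi) p.1) + hvar) := by
    rw [Dcheck, map_prod]
    exact Finset.prod_congr rfl fun p _ => by rw [map_add, map_sub, permK_z, permK_z, permK_hvar]
  rw [hmap]
  exact prod_swap i hi (fun p q => z q - z p + hvar)

lemma perm_Dpoly {n : ℕ} (i : ℕ) (hi : i + 1 < n) :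
    permK (Equiv.swap (fin1 i hi) (fin2 i hi)) (Dpoly n) *
        (z (fin1 i hi) - z (fin2 i hi) + hvar)
      = Dpoly n * (z (fin2 i hi) - z (fin1 i hi) + hvar) := by
  have hmap : permK (Equiv.swap (fin1 i hi) (fin2 i hi)) (Dpoly n)
      = ∏ p ∈ Finset.univ.filter (fun p : Fin n × Fin n => p.1 < p.2),
          (z (Equiv.swap (fin1 i hi) (fin2 i hi) p.1)
            - z (Equiv.swap (fin1 i hi) (fin2 i hi) p.2) + hvar) := by
    rw [Dpoly, map_prod]
    exact Finset.prod_congr rfl fun p _ => by rw [map_add, map_sub, permK_z, permK_z, permK_hvar]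
  rw [hmap]
  exact prod_swap i hi (fun p q => z p - z q + hvar)

lemma main_iff_true {n N : ℕ} (f : VV n N) (i : ℕ) (hi : i + 1 < n) :
    (sOp true i hi f = -f) ↔
      (sOp true i hi (fun m => (Dcheck n)⁻¹ * f m) = fun m => (Dcheck n)⁻¹ * f m) := by
  rw [funext_iff, funext_iff]
  apply forall_congr'
  intro m
  have hab := zsub_ne (fin1_ne_fin2 i hi)
  have hd : Dcheck n ≠ 0 := Dcheck_ne
  have hcd := permK_ne (Equiv.swap (fin1 i hi) (fin2 i hi)) hd
  have hrel : permK (Equiv.swap (fin1 i hi) (fin2 i hi)) (Dcheck n) *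
      (hvar - (z (fin1 i hi) - z (fin2 i hi)))
      = Dcheck n * ((z (fin1 i hi) - z (fin2 i hi)) + hvar) := by
    linear_combination perm_Dcheck i hi
  simp only [sOp, Pi.neg_apply, sign', if_true, map_mul, map_inv₀]
  exact key (z (fin1 i hi) - z (fin2 i hi)) hvar (Dcheck n) _ _ _ _ hab hd hcd hrel

lemma main_iff_false {n N : ℕ} (f : VV n N) (i : ℕ) (hi : i + 1 < n) :
    (sOp false i hi f = -f) ↔
      (sOp false i hi (fun m => (Dpoly n)⁻¹ * f m) = fun m => (Dpoly n)⁻¹ * f m) := by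
  rw [funext_iff, funext_iff]
  apply forall_congr'
  intro m
  have hab := zsub_ne (fin1_ne_fin2 i hi)
  have hd : Dpoly n ≠ 0 := Dpoly_ne
  have hcd := permK_ne (Equiv.swap (fin1 i hi) (fin2 i hi)) hd
  have hrel : permK (Equiv.swap (fin1 i hi) (fin2 i hi)) (Dpoly n) *
      (-hvar - (z (fin1 i hi) - z (fin2 i hi)))
      = Dpoly n * ((z (fin1 i hi) - z (fin2 i hi)) + -hvar) := by
    linear_combination -perm_Dpoly i hi
  simp only [sOp, Pi.neg_apply, sign', Bool.false_eq_true, if_false, map_mul, map_inv₀]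
  exact key (z (fin1 i hi) - z (fin2 i hi)) (-hvar) (Dpoly n) _ _ _ _ hab hd hcd hrel

/-- `f` is skew-invariant with respect to the `S_n^+`-action iff `Ď⁻¹ f` is
invariant with respect to the `S_n^+`-action; and `f` is skew-invariant with respect to
the `S_n^−`-action iff `D⁻¹ f` is invariant with respect to the `S_n^−`-action. -/
theorem statement5 (n N : ℕ) (f : VV n N) :
    ((∀ (i : ℕ) (hi : i + 1 < n), sOp true i hi f = -f) ↔
      (∀ (i : ℕ) (hi : i + 1 < n),
        sOp true i hi (fun m => (Dcheck n)⁻¹ * f m) = fun m => (Dcheck n)⁻¹ * f m)) ∧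
    ((∀ (i : ℕ) (hi : i + 1 < n), sOp false i hi f = -f) ↔
      (∀ (i : ℕ) (hi : i + 1 < n),
        sOp false i hi (fun m => (Dpoly n)⁻¹ * f m) = fun m => (Dpoly n)⁻¹ * f m)) := by
  constructor
  · exact forall_congr' fun i => forall_congr' fun hi => main_iff_true f i hi
  · exact forall_congr' fun i => forall_congr' fun hi => main_iff_false f i hi

end GRTV
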